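/- Let m ∈ ℕ, let (μ_i)_{1≤i≤m−1} and (ν_i)_{1≤i≤m−1} be positive reals, and let B := Σ_{i=1}^{m−1} μ_i · (Σ_{j=i}^{m−1} 1/ν_j). Then for every real sequence (f_i)_{1≤i≤m} with f_m = 0, Σ_{i=1}^{m−1} μ_i f_i² ≤ B · Σ_{i=1}^{m−1} ν_i (f_{i+1} − f_i)². -/

import Mathlib

lemma telescope_aux (f : ℕ → ℝ) (i : ℕ) : ∀ n, i ≤ n →
    ∑ j ∈ Finset.Ico i n, (f j - f (j + 1)) = f i - f n := by
  intro n
  induction n with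
  | zero => intro h; simp [Nat.le_zero.mp h]
  | succ n ih =>
    intro h
    rcases Nat.lt_or_ge i (n + 1) with h' | h'
    · have hin : i ≤ n := Nat.lt_succ_iff.mp h'
      rw [Finset.sum_Ico_succ_top hin, ih hin]; ring
    · have : i = n + 1 := le_antisymm h h'
      simp [this]

/-- Finite discrete Hardy-type inequality (sufficiency, Theorem 2.13). -/
theorem finite_hardy_sufficient (m : ℕ) (hm : 2 ≤ m) (μ ν f : ℕ → ℝ)
    (hμ : ∀ i ∈ Finset.Icc 1 (m - 1), 0 < μ i)
    (hν : ∀ i ∈ Finset.Icc 1 (m - 1), 0 < ν i)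
    (hfm : f m = 0) :
    ∑ i ∈ Finset.Icc 1 (m - 1), μ i * f i ^ 2
      ≤ (∑ i ∈ Finset.Icc 1 (m - 1), μ i * ∑ j ∈ Finset.Icc i (m - 1), 1 / ν j) *
        ∑ i ∈ Finset.Icc 1 (m - 1), ν i * (f (i + 1) - f i) ^ 2 := by
  have hm1 : 1 ≤ m := le_trans one_le_two hm
  set S := ∑ i ∈ Finset.Icc 1 (m - 1), ν i * (f (i + 1) - f i) ^ 2 with hS
  have hSnn : 0 ≤ S := Finset.sum_nonneg fun i hi =>
    mul_nonneg (hν i hi).le (sq_nonneg _)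
  have hmsub : m - 1 + 1 = m := Nat.succ_pred_eq_of_pos hm1
  have key : ∀ i ∈ Finset.Icc 1 (m - 1),
      μ i * f i ^ 2 ≤ μ i * (∑ j ∈ Finset.Icc i (m - 1), 1 / ν j) * S := by
    intro i hi
    obtain ⟨hi1, hi2⟩ := Finset.mem_Icc.mp hi
    have hsub : Finset.Icc i (m - 1) ⊆ Finset.Icc 1 (m - 1) := by
      apply Finset.Icc_subset_Icc_left hi1
    have hIcc : Finset.Icc i (m - 1) = Finset.Ico i m := by
      rw [← Finset.Ico_add_one_right_eq_Icc]; congr 1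
    have him : i ≤ m := le_trans hi2 (Nat.sub_le m 1)
    have hfi : f i = ∑ j ∈ Finset.Icc i (m - 1), (f j - f (j + 1)) := by
      rw [hIcc, telescope_aux f i m him, hfm, sub_zero]
    have hCS : f i ^ 2 ≤ (∑ j ∈ Finset.Icc i (m - 1), 1 / ν j) *
        ∑ j ∈ Finset.Icc i (m - 1), ν j * (f (j + 1) - f j) ^ 2 := by
      have := Finset.sum_mul_sq_le_sq_mul_sq (Finset.Icc i (m - 1))
        (fun j => (Real.sqrt (ν j))⁻¹) (fun j => Real.sqrt (ν j) * (f j - f (j + 1)))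
      have heq : ∀ j ∈ Finset.Icc i (m - 1),
          (Real.sqrt (ν j))⁻¹ * (Real.sqrt (ν j) * (f j - f (j + 1))) = f j - f (j + 1) := by
        intro j hj
        have hνj := hν j (hsub hj)
        rw [← mul_assoc, inv_mul_cancel₀ (Real.sqrt_ne_zero'.mpr hνj), one_mul]
      rw [Finset.sum_congr rfl heq] at this
      calc f i ^ 2 = (∑ j ∈ Finset.Icc i (m - 1), (f j - f (j + 1))) ^ 2 := by rw [← hfi]
        _ ≤ (∑ j ∈ Finset.Icc i (m - 1), ((Real.sqrt (ν j))⁻¹) ^ 2) *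
            ∑ j ∈ Finset.Icc i (m - 1), (Real.sqrt (ν j) * (f j - f (j + 1))) ^ 2 := this
        _ = (∑ j ∈ Finset.Icc i (m - 1), 1 / ν j) *
            ∑ j ∈ Finset.Icc i (m - 1), ν j * (f (j + 1) - f j) ^ 2 := by
            congr 1
            · apply Finset.sum_congr rfl
              intro j hj
              have hνj := hν j (hsub hj)
              rw [← Real.sqrt_inv, Real.sq_sqrt (by positivity), one_div]
            · apply Finset.sum_congr rfl
              intro j hj
              have hνj := hν j (hsub hj)
              rw [mul_pow, Real.sq_sqrt hνj.le]
              ring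
    have hsumle : ∑ j ∈ Finset.Icc i (m - 1), ν j * (f (j + 1) - f j) ^ 2 ≤ S := by
      apply Finset.sum_le_sum_of_subset_of_nonneg hsub
      intro j hj _
      exact mul_nonneg (hν j hj).le (sq_nonneg _)
    have hνinv : 0 ≤ ∑ j ∈ Finset.Icc i (m - 1), 1 / ν j :=
      Finset.sum_nonneg fun j hj => by
        have := hν j (hsub hj); positivity
    calc μ i * f i ^ 2
        ≤ μ i * ((∑ j ∈ Finset.Icc i (m - 1), 1 / ν j) *
            ∑ j ∈ Finset.Icc i (m - 1), ν j * (f (j + 1) - f j) ^ 2) := by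
          apply mul_le_mul_of_nonneg_left hCS (hμ i hi).le
      _ ≤ μ i * ((∑ j ∈ Finset.Icc i (m - 1), 1 / ν j) * S) := by
          apply mul_le_mul_of_nonneg_left _ (hμ i hi).le
          exact mul_le_mul_of_nonneg_left hsumle hνinv
      _ = μ i * (∑ j ∈ Finset.Icc i (m - 1), 1 / ν j) * S := by ring
  calc ∑ i ∈ Finset.Icc 1 (m - 1), μ i * f i ^ 2
      ≤ ∑ i ∈ Finset.Icc 1 (m - 1), μ i * (∑ j ∈ Finset.Icc i (m - 1), 1 / ν j) * S :=
        Finset.sum_le_sum key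
    _ = (∑ i ∈ Finset.Icc 1 (m - 1), μ i * ∑ j ∈ Finset.Icc i (m - 1), 1 / ν j) * S := by
        rw [Finset.sum_mul]
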